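/- Let F, F' : ℝ^p → ℝ with F = f + φ and F' = f' + φ, where f and f' are convex, differentiable, and L-Lipschitz, and φ is μ-strongly convex and differentiable. Let x = argmin F and x' = argmin F'. Then ‖x - x'‖ ≤ 2L/μ. -/

import Mathlib

lemma norm_combo_sq {p : ℕ} (x y : EuclideanSpace ℝ (Fin p)) (t : ℝ) :
    ‖(1 - t) • x + t • y‖ ^ 2
      = (1 - t) * ‖x‖ ^ 2 + t * ‖y‖ ^ 2 - t * (1 - t) * ‖x - y‖ ^ 2 := by
  have h1 := @norm_add_sq_real (EuclideanSpace ℝ (Fin p)) _ _ ((1 - t) • x) (t • y)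
  have h2 := @norm_sub_sq_real (EuclideanSpace ℝ (Fin p)) _ _ x y
  rw [norm_smul, norm_smul] at h1
  rw [real_inner_smul_left, real_inner_smul_right] at h1
  have hx : (‖(1 - t) • x + t • y‖ : ℝ) ^ 2
      = (|1 - t| * ‖x‖) ^ 2 + 2 * ((1 - t) * (t * inner ℝ x y)) + (|t| * ‖y‖) ^ 2 := by
    simpa [Real.norm_eq_abs] using h1
  rw [hx, h2, mul_pow, mul_pow, sq_abs, sq_abs]
  ring

/-- Growth of a strongly convex function at its minimizer. -/
lemma strong_growth {p : ℕ} (F : EuclideanSpace ℝ (Fin p) → ℝ) (μ : ℝ) (hμ : 0 < μ)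
    (hsc : ConvexOn ℝ Set.univ (fun u => F u - μ / 2 * ‖u‖ ^ 2))
    (x : EuclideanSpace ℝ (Fin p)) (hx : IsMinOn F Set.univ x)
    (y : EuclideanSpace ℝ (Fin p)) :
    μ / 2 * ‖x - y‖ ^ 2 ≤ F y - F x := by
  have key : ∀ t : ℝ, t ∈ Set.Ioo (0:ℝ) 1 → (1 - t) * (μ / 2 * ‖x - y‖ ^ 2) ≤ F y - F x := by
    intro t ht
    obtain ⟨ht0, ht1⟩ := ht
    have hcv := hsc.2 (Set.mem_univ x) (Set.mem_univ y)
      (show (0:ℝ) ≤ 1 - t by linarith) (le_of_lt ht0) (by ring)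
    simp only at hcv
    have hmin : F x ≤ F ((1 - t) • x + t • y) := isMinOn_iff.mp hx _ (Set.mem_univ _)
    have hn := norm_combo_sq x y t
    simp only [smul_eq_mul] at hcv
    have hstep : t * ((1 - t) * (μ / 2 * ‖x - y‖ ^ 2)) ≤ t * (F y - F x) := by nlinarith
    exact le_of_mul_le_mul_left hstep ht0
  set c := μ / 2 * ‖x - y‖ ^ 2 with hc
  have hD : (0:ℝ) ≤ F y - F x := by
    have := isMinOn_iff.mp hx y (Set.mem_univ y); linarith
  by_contra hcon
  push_neg at hcon
  have hcpos : 0 < c := lt_of_le_of_lt hD hcon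
  set t := (c - (F y - F x)) / (2 * c) with htdef
  have ht0 : 0 < t := by
    apply div_pos; linarith; linarith
  have ht1 : t < 1 := by
    rw [htdef, div_lt_one (by linarith)]; linarith
  have := key t ⟨ht0, ht1⟩
  have htc : t * c = (c - (F y - F x)) / 2 := by
    rw [htdef]; field_simp
  nlinarith [this]

/-- Sensitivity of the argmin of strongly convex functions: if `F = f + φ`, `F' = f' + φ`
with `f, f'` convex differentiable `L`-Lipschitz and `φ` `μ`-strongly convex differentiable,
then the minimizers `x` of `F` and `x'` of `F'` satisfy `‖x - x'‖ ≤ 2L/μ`. -/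
theorem argmin_sensitivity
    {p : ℕ} (f f' φ : EuclideanSpace ℝ (Fin p) → ℝ)
    (L μ : ℝ) (hL : 0 < L) (hμ : 0 < μ)
    (hfconv : ConvexOn ℝ Set.univ f) (hf'conv : ConvexOn ℝ Set.univ f')
    (hfdiff : Differentiable ℝ f) (hf'diff : Differentiable ℝ f')
    (hφdiff : Differentiable ℝ φ)
    (hfLip : ∀ u v, |f u - f v| ≤ L * ‖u - v‖)
    (hf'Lip : ∀ u v, |f' u - f' v| ≤ L * ‖u - v‖)
    (hφsc : ConvexOn ℝ Set.univ (fun u => φ u - μ / 2 * ‖u‖ ^ 2))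
    (x x' : EuclideanSpace ℝ (Fin p))
    (hx : IsMinOn (fun u => f u + φ u) Set.univ x)
    (hx' : IsMinOn (fun u => f' u + φ u) Set.univ x') :
    ‖x - x'‖ ≤ 2 * L / μ := by
  have hFsc : ConvexOn ℝ Set.univ (fun u => (f u + φ u) - μ / 2 * ‖u‖ ^ 2) := by
    have := hfconv.add hφsc
    have e : (fun u => (f u + φ u) - μ / 2 * ‖u‖ ^ 2) = f + fun u => φ u - μ / 2 * ‖u‖ ^ 2 := by
      funext u; simp only [Pi.add_apply]; ring
    rw [e]; exact this
  have hF'sc : ConvexOn ℝ Set.univ (fun u => (f' u + φ u) - μ / 2 * ‖u‖ ^ 2) := by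
    have := hf'conv.add hφsc
    have e : (fun u => (f' u + φ u) - μ / 2 * ‖u‖ ^ 2) = f' + fun u => φ u - μ / 2 * ‖u‖ ^ 2 := by
      funext u; simp only [Pi.add_apply]; ring
    rw [e]; exact this
  have h1 := strong_growth (fun u => f u + φ u) μ hμ hFsc x hx x'
  have h2 := strong_growth (fun u => f' u + φ u) μ hμ hF'sc x' hx' x
  have hnorm : ‖x' - x‖ = ‖x - x'‖ := norm_sub_rev x' x
  rw [hnorm] at h2
  have hl1 : f x' - f x ≤ L * ‖x - x'‖ := by
    have := hfLip x' x; rw [hnorm] at this; exact (abs_le.mp this).2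
  have hl2 : f' x - f' x' ≤ L * ‖x - x'‖ := (abs_le.mp (hf'Lip x x')).2
  have hsum : μ * ‖x - x'‖ ^ 2 ≤ 2 * L * ‖x - x'‖ := by nlinarith
  rcases eq_or_lt_of_le (norm_nonneg (x - x')) with h | h
  · rw [← h]; positivity
  · rw [le_div_iff₀ hμ]; nlinarith
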